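/- The tropical addition of complex numbers is associative: for all a,b,c ∈ ℂ, (a⊞b)⊞c = a⊞(b⊞c), where the operation is extended elementwise to subsets. -/

import Mathlib

open Classical in
/-- The shortest arc connecting `a` and `b` on the circle `{z : |z| = |a|}`
(for `|a| = |b|`, `a + b ≠ 0`): the points of the circle lying on the cone
of nonnegative combinations of `a` and `b`. -/
noncomputable def arc (a b : ℂ) : Set ℂ :=
  {c | ‖c‖ = ‖a‖ ∧
    ∃ l m : ℝ, 0 ≤ l ∧ 0 ≤ m ∧ c = (l : ℂ) * a + (m : ℂ) * b}

open Classical in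
/-- The tropical sum of two complex numbers. -/
noncomputable def tropAdd (a b : ℂ) : Set ℂ :=
  if ‖b‖ < ‖a‖ then {a}
  else if ‖a‖ < ‖b‖ then {b}
  else if a + b = 0 then {c | ‖c‖ ≤ ‖a‖}
  else arc a b

/-- Elementwise extension of the tropical addition to subsets. -/
def setTrop (A B : Set ℂ) : Set ℂ :=
  ⋃ a ∈ A, ⋃ b ∈ B, tropAdd a b

section TropAux

lemma self_mem_arc (a b : ℂ) : a ∈ arc a b :=
  ⟨rfl, 1, 0, zero_le_one, le_refl 0, by push_cast; ring⟩

lemma right_mem_arc {a b : ℂ} (h : ‖b‖ = ‖a‖) : b ∈ arc a b :=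
  ⟨h, 0, 1, le_refl 0, zero_le_one, by push_cast; ring⟩

lemma arc_comm {a b : ℂ} (h : ‖a‖ = ‖b‖) : arc a b = arc b a := by
  ext z
  constructor
  · rintro ⟨hz, l, m, hl, hm, rfl⟩
    exact ⟨hz.trans h, m, l, hm, hl, by ring⟩
  · rintro ⟨hz, l, m, hl, hm, rfl⟩
    exact ⟨hz.trans h.symm, m, l, hm, hl, by ring⟩

lemma tropAdd_eq_left {a b : ℂ} (h : ‖b‖ < ‖a‖) : tropAdd a b = {a} := by
  simp [tropAdd, h]

lemma tropAdd_eq_right {a b : ℂ} (h : ‖a‖ < ‖b‖) : tropAdd a b = {b} := by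
  simp [tropAdd, h, asymm h]

lemma tropAdd_eq_ball {a b : ℂ} (h : a + b = 0) :
    tropAdd a b = {z : ℂ | ‖z‖ ≤ ‖a‖} := by
  have hb : b = -a := by linear_combination h
  subst hb
  simp [tropAdd]

lemma tropAdd_eq_arc {a b : ℂ} (h : ‖a‖ = ‖b‖) (h0 : a + b ≠ 0) :
    tropAdd a b = arc a b := by
  simp [tropAdd, h, h0]

lemma mem_tropAdd_abs_le {x a b : ℂ} (h : x ∈ tropAdd a b) :
    ‖x‖ ≤ max (‖a‖) (‖b‖) := by
  unfold tropAdd at h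
  split_ifs at h with h1 h2 h3
  · rw [Set.mem_singleton_iff] at h; subst h; exact le_max_left _ _
  · rw [Set.mem_singleton_iff] at h; subst h; exact le_max_right _ _
  · exact le_trans h (le_max_left _ _)
  · exact (le_of_eq h.1).trans (le_max_left _ _)

lemma tropAdd_nonempty (a b : ℂ) : (tropAdd a b).Nonempty := by
  unfold tropAdd
  split_ifs
  · exact ⟨a, rfl⟩
  · exact ⟨b, rfl⟩
  · exact ⟨a, by simp⟩
  · exact ⟨a, self_mem_arc a b⟩

lemma tropAdd_comm (a b : ℂ) : tropAdd a b = tropAdd b a := by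
  unfold tropAdd
  rcases lt_trichotomy (‖a‖) (‖b‖) with h | h | h
  · rw [if_neg (asymm h), if_pos h, if_pos h]
  · have h1 : ¬ ‖b‖ < ‖a‖ := by rw [h]; exact lt_irrefl _
    have h2 : ¬ ‖a‖ < ‖b‖ := by rw [h]; exact lt_irrefl _
    rw [if_neg h1, if_neg h2, if_neg h2, if_neg h1, add_comm b a]
    by_cases h0 : a + b = 0
    · simp [h0, h]
    · simp only [if_neg h0]
      exact arc_comm h
  · rw [if_pos h, if_neg (asymm h), if_pos h]

lemma setTrop_right (A : Set ℂ) (c : ℂ) : setTrop A {c} = ⋃ x ∈ A, tropAdd x c := by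
  simp [setTrop]

lemma setTrop_left (a : ℂ) (B : Set ℂ) : setTrop {a} B = ⋃ y ∈ B, tropAdd a y := by
  simp [setTrop]

lemma biUnion_flip (a : ℂ) (S : Set ℂ) :
    ⋃ y ∈ S, tropAdd a y = ⋃ y ∈ S, tropAdd y a :=
  Set.iUnion₂_congr fun y _ => tropAdd_comm a y

lemma biUnion_eq_right {S : Set ℂ} {c : ℂ} (hne : S.Nonempty)
    (h : ∀ x ∈ S, ‖x‖ < ‖c‖) : ⋃ x ∈ S, tropAdd x c = {c} := by
  ext z
  simp only [Set.mem_iUnion, Set.mem_singleton_iff]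
  constructor
  · rintro ⟨x, hx, hz⟩
    rw [tropAdd_eq_right (h x hx)] at hz
    exact hz
  · rintro rfl
    exact ⟨hne.choose, hne.choose_spec, by rw [tropAdd_eq_right (h _ hne.choose_spec)]; rfl⟩

lemma biUnion_eq_self {S : Set ℂ} {c : ℂ}
    (h : ∀ x ∈ S, ‖c‖ < ‖x‖) : ⋃ x ∈ S, tropAdd x c = S := by
  ext z
  simp only [Set.mem_iUnion]
  constructor
  · rintro ⟨x, hx, hz⟩
    rw [tropAdd_eq_left (h x hx)] at hz
    rw [Set.mem_singleton_iff] at hz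
    subst hz; exact hx
  · intro hz
    exact ⟨z, hz, by rw [tropAdd_eq_left (h _ hz)]; rfl⟩

lemma biUnion_ball {c : ℂ} {R : ℝ} (h : ‖c‖ ≤ R) :
    ⋃ x ∈ {x : ℂ | ‖x‖ ≤ R}, tropAdd x c = {z : ℂ | ‖z‖ ≤ R} := by
  ext z
  simp only [Set.mem_iUnion, Set.mem_setOf_eq]
  constructor
  · rintro ⟨x, hx, hz⟩
    exact (mem_tropAdd_abs_le hz).trans (max_le hx h)
  · intro hz
    by_cases hzc : ‖z‖ ≤ ‖c‖
    · refine ⟨-c, by simpa using h, ?_⟩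
      rw [tropAdd_eq_ball (by ring)]
      simpa using hzc
    · exact ⟨z, hz, by rw [tropAdd_eq_left (lt_of_not_ge hzc)]; rfl⟩

lemma biUnion_subset_ball {S : Set ℂ} {c : ℂ} {r : ℝ}
    (hS : ∀ x ∈ S, ‖x‖ ≤ r) (hc : ‖c‖ ≤ r) :
    (⋃ x ∈ S, tropAdd x c) ⊆ {z : ℂ | ‖z‖ ≤ r} := by
  intro z hz
  simp only [Set.mem_iUnion] at hz
  obtain ⟨x, hx, hzx⟩ := hz
  exact (mem_tropAdd_abs_le hzx).trans (max_le (hS x hx) hc)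

lemma abs_pos_of_add_ne {a b : ℂ} (hb : ‖b‖ = ‖a‖) (hab : a + b ≠ 0) :
    0 < ‖a‖ := by
  rcases (norm_nonneg a).lt_or_eq with h | h
  · exact h
  · exfalso
    have ha : a = 0 := by simpa using h.symm
    have hb0 : b = 0 := by
      have : ‖b‖ = 0 := by rw [hb, ← h]
      simpa using this
    exact hab (by rw [ha, hb0, add_zero])

lemma biUnion_arc {a b c : ℂ} (hb : ‖b‖ = ‖a‖)
    (hc : ‖c‖ = ‖a‖) (hab : a + b ≠ 0) :
    ⋃ x ∈ arc a b, arc x c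
      = {z : ℂ | ‖z‖ = ‖a‖ ∧
          ∃ l m n : ℝ, 0 ≤ l ∧ 0 ≤ m ∧ 0 ≤ n ∧ z = (l:ℂ) * a + (m:ℂ) * b + (n:ℂ) * c} := by
  have hr : 0 < ‖a‖ := abs_pos_of_add_ne hb hab
  ext z
  simp only [Set.mem_iUnion, Set.mem_setOf_eq]
  constructor
  · rintro ⟨x, ⟨hx, l, m, hl, hm, rfl⟩, hz, p, q, hp, hq, rfl⟩
    refine ⟨hz.trans hx, p * l, p * m, q, by positivity, by positivity, hq, by push_cast; ring⟩
  · rintro ⟨hz, l, m, n, hl, hm, hn, rfl⟩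
    set w : ℂ := (l:ℂ) * a + (m:ℂ) * b with hw
    by_cases hw0 : w = 0
    · -- then l = m = 0 and z = c
      have hlm : l = m := by
        have h1 : (l:ℂ) * a = -((m:ℂ) * b) := by
          rw [hw] at hw0; linear_combination hw0
        have h2 : l * ‖a‖ = m * ‖a‖ := by
          have := congrArg (‖·‖) h1
          simpa [norm_mul, Complex.norm_real, Real.norm_eq_abs, abs_of_nonneg hl, abs_of_nonneg hm, hb] using this
        exact mul_right_cancel₀ (ne_of_gt hr) h2
      have hl0 : l = 0 := by
        by_contra hl0
        apply hab
        have : (l:ℂ) * (a + b) = 0 := by rw [hw] at hw0; rw [mul_add]; rw [hlm] at hw0 ⊢; linear_combination hw0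
        rcases mul_eq_zero.1 this with h | h
        · exact absurd (by exact_mod_cast h) hl0
        · exact h
      have hm0 : m = 0 := hlm ▸ hl0
      rw [hw0, zero_add] at hz
      have hn1 : n = 1 := by
        have h3 : n * ‖c‖ = ‖a‖ := by
          simpa [norm_mul, Complex.norm_real, Real.norm_eq_abs, abs_of_nonneg hn] using hz
        rw [hc] at h3
        exact mul_right_cancel₀ (ne_of_gt hr) (h3.trans (one_mul _).symm)
      refine ⟨a, self_mem_arc a b, ?_⟩
      rw [hw0, hn1]
      refine ⟨by push_cast; simpa using hc, 0, 1, le_refl 0, zero_le_one, by push_cast; ring⟩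
    · have hwpos : 0 < ‖w‖ := by
        rcases (norm_nonneg w).lt_or_eq with h | h
        · exact h
        · exact absurd (by simpa using h.symm) hw0
      have hwne : ‖w‖ ≠ 0 := ne_of_gt hwpos
      have haC : ((‖a‖ : ℝ) : ℂ) ≠ 0 := by exact_mod_cast ne_of_gt hr
      have hwC : ((‖w‖ : ℝ) : ℂ) ≠ 0 := by exact_mod_cast hwne
      set r : ℝ := ‖a‖ / ‖w‖ with hrdef
      have hrpos : 0 < r := div_pos hr hwpos
      refine ⟨(r:ℂ) * w, ⟨?_, r * l, r * m, by positivity, by positivity, by push_cast [hw]; ring⟩, ?_, ?_⟩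
      · rw [norm_mul, Complex.norm_real, Real.norm_eq_abs, abs_of_nonneg hrpos.le, hrdef]
        field_simp
      · rw [norm_mul, Complex.norm_real, Real.norm_eq_abs, abs_of_nonneg hrpos.le, hrdef]
        rw [hz]
        field_simp
      · refine ⟨‖w‖ / ‖a‖, n, by positivity, hn, ?_⟩
        have : ((‖w‖ / ‖a‖ : ℝ) : ℂ) * ((r:ℂ) * w) = w := by
          rw [hrdef]
          push_cast
          field_simp
        rw [this, hw]

lemma cone_shift {a b c : ℂ} (hb : ‖b‖ = ‖a‖)
    (hc : ‖c‖ = ‖a‖) (hbc : b + c ≠ 0) :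
    (∃ l m : ℝ, 0 ≤ l ∧ 0 ≤ m ∧ (l:ℂ) * a + (m:ℂ) * b + c = 0) →
    ∃ l m : ℝ, 0 ≤ l ∧ 0 ≤ m ∧ a + (l:ℂ) * b + (m:ℂ) * c = 0 := by
  rintro ⟨l, m, hl, hm, h⟩
  have hr : 0 < ‖a‖ := by
    apply abs_pos_of_add_ne (a := b) (b := c) _ hbc |>.trans_le hb.le
    rw [hb, hc]
  have hl0 : 0 < l := by
    rcases hl.lt_or_eq with h' | h'
    · exact h'
    · exfalso
      rw [← h'] at h
      have h2 : (m:ℂ) * b = -c := by push_cast at h; linear_combination h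
      have hm1 : m = 1 := by
        have := congrArg (‖·‖) h2
        simp only [norm_mul, Complex.norm_real, Real.norm_eq_abs, abs_of_nonneg hm, norm_neg, hb, hc] at this
        exact mul_right_cancel₀ (ne_of_gt hr) (this.trans (one_mul _).symm)
      rw [hm1] at h2
      exact hbc (by push_cast at h2; linear_combination h2)
  have hlC : (l:ℂ) ≠ 0 := by exact_mod_cast ne_of_gt hl0
  refine ⟨m / l, 1 / l, by positivity, by positivity, ?_⟩
  push_cast
  field_simp
  linear_combination h

end TropAux

/-- the tropical addition of complex numbers is associative. -/
theorem tropAdd_assoc (a b c : ℂ) :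
    setTrop (tropAdd a b) {c} = setTrop {a} (tropAdd b c) := by
  rw [setTrop_right, setTrop_left]
  rcases lt_trichotomy (‖a‖) (‖b‖) with hab | hab | hab
  · -- |a| < |b|
    rw [tropAdd_eq_right hab, Set.biUnion_singleton]
    rcases lt_trichotomy (‖b‖) (‖c‖) with hbc | hbc | hbc
    · rw [tropAdd_eq_right hbc, Set.biUnion_singleton, tropAdd_eq_right (hab.trans hbc)]
    · by_cases hbc0 : b + c = 0
      · rw [tropAdd_eq_ball hbc0, biUnion_flip, biUnion_ball hab.le]
      · rw [tropAdd_eq_arc hbc hbc0, biUnion_flip]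
        exact (biUnion_eq_self fun y hy => by rw [hy.1]; exact hab).symm
    · rw [tropAdd_eq_left hbc, Set.biUnion_singleton, tropAdd_eq_right hab]
  · -- |a| = |b|
    rcases lt_trichotomy (‖b‖) (‖c‖) with hbc | hbc | hbc
    · -- |c| biggest
      rw [tropAdd_eq_right hbc, Set.biUnion_singleton, tropAdd_eq_right (hab.trans_lt hbc)]
      exact biUnion_eq_right (tropAdd_nonempty a b)
        (fun x hx => (mem_tropAdd_abs_le hx).trans_lt (max_lt (hab.trans_lt hbc) hbc))
    · -- all moduli equal
      have hca : ‖c‖ = ‖a‖ := hbc.symm.trans hab.symm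
      by_cases hab0 : a + b = 0
      · rw [tropAdd_eq_ball hab0, biUnion_ball hca.le]
        by_cases hbc0 : b + c = 0
        · rw [tropAdd_eq_ball hbc0, biUnion_flip, biUnion_ball hab.le, hab]
        · rw [tropAdd_eq_arc hbc hbc0]
          apply Set.Subset.antisymm
          · rw [← tropAdd_eq_ball hab0]
            exact Set.subset_biUnion_of_mem (u := fun y => tropAdd a y) (self_mem_arc b c)
          · rw [biUnion_flip]
            exact biUnion_subset_ball (fun y hy => by rw [hy.1, ← hab]) (le_refl _)
      · by_cases hbc0 : b + c = 0
        · rw [tropAdd_eq_arc hab hab0, tropAdd_eq_ball hbc0, biUnion_flip,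
            biUnion_ball hab.le]
          apply Set.Subset.antisymm
          · exact biUnion_subset_ball (fun x hx => by rw [hx.1, hab]) hbc.symm.le
          · rw [← tropAdd_eq_ball hbc0]
            exact Set.subset_biUnion_of_mem (u := fun x => tropAdd x c) (right_mem_arc hab.symm)
        · -- main case: all equal, a+b ≠ 0, b+c ≠ 0
          rw [tropAdd_eq_arc hab hab0, tropAdd_eq_arc hbc hbc0]
          by_cases hP : ∃ l m : ℝ, 0 ≤ l ∧ 0 ≤ m ∧ (l:ℂ) * a + (m:ℂ) * b + c = 0
          · have hP' := cone_shift hab.symm hca hbc0 hP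
            obtain ⟨l, m, hl, hm, hEq⟩ := hP
            obtain ⟨l', m', hl', hm', hEq'⟩ := hP'
            have hcmem : -c ∈ arc a b :=
              ⟨by rw [norm_neg]; exact hca, l, m, hl, hm, by linear_combination -hEq⟩
            have hamem : -a ∈ arc b c :=
              ⟨by rw [norm_neg]; exact hab, l', m', hl', hm', by linear_combination -hEq'⟩
            have h1 : ⋃ x ∈ arc a b, tropAdd x c = {z : ℂ | ‖z‖ ≤ ‖a‖} := by
              apply Set.Subset.antisymm
              · exact biUnion_subset_ball (fun x hx => hx.1.le) hca.le
              · have hcc : tropAdd (-c) c = {z : ℂ | ‖z‖ ≤ ‖a‖} := by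
                  rw [tropAdd_eq_ball (by ring), norm_neg, hca]
                rw [← hcc]
                exact Set.subset_biUnion_of_mem (u := fun x => tropAdd x c) hcmem
            have h2 : ⋃ y ∈ arc b c, tropAdd a y = {z : ℂ | ‖z‖ ≤ ‖a‖} := by
              apply Set.Subset.antisymm
              · rw [biUnion_flip]
                exact biUnion_subset_ball (fun y hy => by rw [hy.1, ← hab]) (le_refl _)
              · have haa : tropAdd a (-a) = {z : ℂ | ‖z‖ ≤ ‖a‖} :=
                  tropAdd_eq_ball (by ring)
                rw [← haa]
                exact Set.subset_biUnion_of_mem (u := fun y => tropAdd a y) hamem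
            rw [h1, h2]
          · have hP' : ¬ ∃ l m : ℝ, 0 ≤ l ∧ 0 ≤ m ∧ a + (l:ℂ) * b + (m:ℂ) * c = 0 := by
              rintro ⟨l, m, hl, hm, hEq⟩
              apply hP
              have hsh := cone_shift (a := c) (b := b) (c := a) (by rw [hbc]) (by rw [hab, hbc])
                (by rwa [add_comm]) ⟨m, l, hm, hl, by linear_combination hEq⟩
              obtain ⟨l', m', h1', h2', h3'⟩ := hsh
              exact ⟨m', l', h2', h1', by linear_combination h3'⟩
            have e1 : ⋃ x ∈ arc a b, tropAdd x c = ⋃ x ∈ arc a b, arc x c := by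
              refine Set.iUnion₂_congr fun x hx => tropAdd_eq_arc (by rw [hx.1, hab, hbc]) ?_
              intro hxc
              obtain ⟨hx1, l, m, hl, hm, hxeq⟩ := hx
              exact hP ⟨l, m, hl, hm, by linear_combination hxc - hxeq⟩
            have e2 : ⋃ y ∈ arc b c, tropAdd a y = ⋃ y ∈ arc b c, arc a y := by
              refine Set.iUnion₂_congr fun y hy => tropAdd_eq_arc (by rw [hy.1, hab]) ?_
              intro hya
              obtain ⟨hy1, l, m, hl, hm, hyeq⟩ := hy
              exact hP' ⟨l, m, hl, hm, by linear_combination hya - hyeq⟩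
            rw [e1, e2]
            have e3 : ⋃ y ∈ arc b c, arc a y = ⋃ y ∈ arc c b, arc y a := by
              rw [arc_comm hbc]
              exact Set.iUnion₂_congr fun y hy => arc_comm (by rw [hy.1, hca])
            rw [e3, biUnion_arc hab.symm hca hab0,
              biUnion_arc (a := c) (b := b) (c := a) (by rw [hbc]) (by rw [hab, hbc])
                (by rwa [add_comm])]
            ext z
            simp only [Set.mem_setOf_eq]
            constructor
            · rintro ⟨h1, l, m, n, hl, hm, hn, rfl⟩
              exact ⟨by rw [h1, hab, hbc], n, m, l, hn, hm, hl, by ring⟩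
            · rintro ⟨h1, l, m, n, hl, hm, hn, rfl⟩
              exact ⟨h1.trans (hbc.symm.trans hab.symm), n, m, l, hn, hm, hl, by ring⟩
    · -- |c| smallest
      rw [tropAdd_eq_left hbc, Set.biUnion_singleton]
      by_cases hab0 : a + b = 0
      · rw [tropAdd_eq_ball hab0, biUnion_ball (hbc.trans_eq hab.symm).le]
      · rw [tropAdd_eq_arc hab hab0]
        exact biUnion_eq_self fun x hx => by rw [hx.1, hab]; exact hbc
  · -- |b| < |a|
    rw [tropAdd_eq_left hab, Set.biUnion_singleton]
    rcases lt_trichotomy (‖b‖) (‖c‖) with hbc | hbc | hbc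
    · rw [tropAdd_eq_right hbc, Set.biUnion_singleton]
    · rw [tropAdd_eq_left (hbc.symm.trans_lt hab), biUnion_flip]
      exact (biUnion_eq_right (tropAdd_nonempty b c)
        (fun y hy => (mem_tropAdd_abs_le hy).trans_lt (max_lt hab (hbc.symm.trans_lt hab)))).symm
    · rw [tropAdd_eq_left hbc, Set.biUnion_singleton, tropAdd_eq_left hab,
        tropAdd_eq_left (hbc.trans hab)]
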